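/- arXiv:2209.14357 — 2 statements merged into one kernel-verified Lean document; each statement's English description precedes it below -/
import Mathlib

section
/- Let B be a locally compact abelian topological group which has a compact open subgroup K such that the quotient group B/K is finitely generated. Then every continuous group homomorphism χ : B → μ_∞ (the group of all complex roots of unity, with the discrete topology) has finite order. -/
/-- If `B` is a locally compact abelian topological group possessing a compact open subgroup `K`
with `B ⧸ K` finitely generated, then every continuous homomorphism from `B` to the group of
roots of unity `μ∞ ⊂ ℂˣ` (with the discrete topology) has finite order.  Taking values in `μ∞`
is expressed by `∀ b, IsOfFinOrder (χ b)`, and continuity for the discrete topology on the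
target by `@Continuous B ℂˣ tB ⊥ χ`. -/
theorem stmt1 {B : Type*} [CommGroup B] [tB : TopologicalSpace B] [IsTopologicalGroup B]
    [LocallyCompactSpace B] (K : Subgroup B) (hKc : IsCompact (K : Set B))
    (hKo : IsOpen (K : Set B)) (hfg : Group.FG (B ⧸ K))
    (χ : B →* ℂˣ) (hvals : ∀ b, IsOfFinOrder (χ b))
    (hχ : @Continuous B ℂˣ tB ⊥ χ) :
    ∃ n : ℕ, 0 < n ∧ ∀ b, χ b ^ n = 1 := by
  classical
  letI : TopologicalSpace ℂˣ := ⊥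
  haveI : DiscreteTopology ℂˣ := ⟨rfl⟩
  -- the image of the compact K under a continuous map to a discrete space is finite
  have hKfin : (χ '' (K : Set B)).Finite := (hKc.image hχ).finite_of_discrete
  -- generators of B ⧸ K
  obtain ⟨S, hS⟩ := hfg
  set T : Finset B := S.image Quotient.out with hT
  set H : Subgroup B := Subgroup.closure ((K : Set B) ∪ (T : Set B)) with hH
  have hHtop : ∀ b : B, b ∈ H := by
    intro b
    have hmem : (b : B ⧸ K) ∈ Subgroup.closure (S : Set (B ⧸ K)) := by
      rw [hS]; exact Subgroup.mem_top _
    have hle : Subgroup.closure (S : Set (B ⧸ K)) ≤ Subgroup.map (QuotientGroup.mk' K) H := by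
      refine (Subgroup.closure_le _).2 ?_
      intro x hx
      refine ⟨x.out, Subgroup.subset_closure (Or.inr ?_), x.out_eq⟩
      exact Finset.mem_coe.2 (Finset.mem_image_of_mem _ hx)
    obtain ⟨h, hh, hhb⟩ := hle hmem
    have hk : h⁻¹ * b ∈ K := QuotientGroup.eq.mp hhb
    have hb : b = h * (h⁻¹ * b) := by group
    rw [hb]
    exact H.mul_mem hh (Subgroup.subset_closure (Or.inl hk))
  -- the finite generating set of χ(B)
  set F : Set ℂˣ := χ '' ((K : Set B) ∪ (T : Set B)) with hF
  have hFfin : F.Finite := by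
    rw [hF, Set.image_union]
    exact hKfin.union (T.finite_toSet.image χ)
  set n : ℕ := ∏ g ∈ hFfin.toFinset, orderOf g with hn
  have hnpos : 0 < n := by
    apply Finset.prod_pos
    intro g hg
    rw [Set.Finite.mem_toFinset] at hg
    obtain ⟨b, _, rfl⟩ := hg
    exact (hvals b).orderOf_pos
  refine ⟨n, hnpos, fun b => ?_⟩
  have hbmem : χ b ∈ Subgroup.map χ H := Subgroup.mem_map_of_mem χ (hHtop b)
  rw [hH, MonoidHom.map_closure] at hbmem
  have hsub : χ '' ((K : Set B) ∪ (T : Set B)) ⊆ ((powMonoidHom n : ℂˣ →* ℂˣ).ker : Set ℂˣ) := by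
    intro g hg
    have hgF : g ∈ hFfin.toFinset := (Set.Finite.mem_toFinset _).2 hg
    have : orderOf g ∣ n := Finset.dvd_prod_of_mem _ hgF
    simpa [MonoidHom.mem_ker, powMonoidHom_apply] using orderOf_dvd_iff_pow_eq_one.mp this
  have := (Subgroup.closure_le _).2 hsub hbmem
  simpa [MonoidHom.mem_ker, powMonoidHom_apply] using this
end

section
/- Let Γ be a group acting on a complex torus T̂ = Hom_ℤ(X, ℂ×) (X finitely generated free) through a finite quotient, and suppose c ∈ C¹(Γ, T̂) is a 1-cochain with c² ∈ B¹(Γ, T̂) (the square of c is a coboundary) and such that the differential ∂c is a 2-cocycle of finite order. If b ∈ T̂ satisfies that the coboundary σ ↦ b⁻¹σ(b) has finite order in C¹(Γ, T̂), i.e. there is n with b^{-n}σ(b^n) = 1 for all σ, and if b^n lies in the identity component of the Γ-fixed points T̂^{Γ,0}, then there exists t ∈ T̂^{Γ,0} with tⁿ = bⁿ, and b' = t⁻¹b is a torsion element of T̂ with b'⁻¹σ(b') = b⁻¹σ(b) for all σ. Consequently every coboundary in B¹(Γ, T̂) ∩ C¹(Γ, T̂[∞]) is the coboundary of a torsion element.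 -/
open Complex

noncomputable def eC (z : ℂ) : ℂˣ := Units.mk0 (Complex.exp z) (Complex.exp_ne_zero z)

lemma eC_val (z : ℂ) : ((eC z : ℂˣ) : ℂ) = Complex.exp z := rfl

lemma eC_add (z w : ℂ) : eC (z + w) = eC z * eC w := by
  ext : 1; simp [eC_val, Complex.exp_add]

lemma eC_zero : eC 0 = 1 := by ext : 1; simp [eC_val]

lemma eC_zpow (z : ℂ) (k : ℤ) : eC z ^ k = eC (k * z) := by
  ext : 1
  rw [Units.val_zpow_eq_zpow_val, eC_val, eC_val, ← Complex.exp_int_mul]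

lemma eC_pow (z : ℂ) (k : ℕ) : eC z ^ k = eC (k * z) := by
  ext : 1
  rw [Units.val_pow_eq_pow_val, eC_val, eC_val, ← Complex.exp_nat_mul]

noncomputable def eG {r : ℕ} (v : Fin r → ℂ) : Fin r → ℂˣ := fun i => eC (v i)

lemma eG_add {r : ℕ} (v w : Fin r → ℂ) : eG (v + w) = eG v * eG w := by
  funext i; exact eC_add _ _

lemma eG_zero {r : ℕ} : eG (0 : Fin r → ℂ) = 1 := by funext i; exact eC_zero

lemma eG_pow {r : ℕ} (v : Fin r → ℂ) (k : ℕ) : eG v ^ k = eG ((k : ℂ) • v) := by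
  funext i; exact eC_pow _ _

lemma val_prod_zpow {r : ℕ} (x : Fin r → ℂˣ) (μ : Fin r → ℤ) :
    ((∏ j, x j ^ μ j : ℂˣ) : ℂ) = ∏ j, (x j : ℂ) ^ μ j := by
  rw [← Units.coeHom_apply, map_prod]
  simp [Units.val_zpow_eq_zpow_val]

lemma eG_prod {r : ℕ} (v : Fin r → ℂ) (μ : Fin r → ℤ) :
    (∏ j, eG v j ^ μ j) = eC (∑ j, (μ j : ℂ) * v j) := by
  ext : 1
  rw [val_prod_zpow, eC_val, Complex.exp_sum]
  refine Finset.prod_congr rfl fun j _ => ?_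
  rw [show (eG v j : ℂ) = Complex.exp (v j) from rfl, ← Complex.exp_int_mul]

lemma eG_log {r : ℕ} (x : Fin r → ℂˣ) : eG (fun i => Complex.log (x i)) = x := by
  funext i; ext : 1; exact Complex.exp_log (Units.ne_zero _)
section core
variable {r : ℕ} {ι : Type*} (m : ι → Fin r → ℤ)

def Vs : Set (Fin r → ℂ) := {v | ∀ p, ∑ j, (m p j : ℂ) * v j = 0}

lemma Vs_zero : (0 : Fin r → ℂ) ∈ Vs m := fun p => by simp

lemma Vs_smul {v : Fin r → ℂ} (hv : v ∈ Vs m) (c : ℂ) : c • v ∈ Vs m := fun p => by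
  have := hv p
  simp only [Pi.smul_apply, smul_eq_mul]
  calc ∑ j, (m p j : ℂ) * (c * v j) = c * ∑ j, (m p j : ℂ) * v j := by
        rw [Finset.mul_sum]; refine Finset.sum_congr rfl fun j _ => by ring
    _ = 0 := by rw [this, mul_zero]

lemma Vs_add {v w : Fin r → ℂ} (hv : v ∈ Vs m) (hw : w ∈ Vs m) : v + w ∈ Vs m := fun p => by
  have h1 := hv p; have h2 := hw p
  simp only [Pi.add_apply]
  calc ∑ j, (m p j : ℂ) * (v j + w j)
      = (∑ j, (m p j : ℂ) * v j) + ∑ j, (m p j : ℂ) * w j := by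
        rw [← Finset.sum_add_distrib]; exact Finset.sum_congr rfl fun j _ => by ring
    _ = 0 := by rw [h1, h2, add_zero]

lemma Vs_convex : Convex ℝ (Vs m) := by
  intro v hv w hw a b _ _ _
  have := Vs_add m (Vs_smul m hv (a : ℂ)) (Vs_smul m hw (b : ℂ))
  convert this using 2
  all_goals (funext j; simp [Complex.real_smul])

-- the very small neighborhood lemma
lemma nbhd_lemma (hm : (Set.range m).Finite) (S : Set (Fin r → ℂˣ))
    (hS : ∀ x, x ∈ S ↔ ∀ p, (∏ j, x j ^ m p j) = 1) :
    ∃ U ∈ nhds (1 : Fin r → ℂˣ), S ∩ U ⊆ eG '' (Vs m) := by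
  classical
  set K : ℝ := 1 + ∑ μ ∈ hm.toFinset, ∑ j, |(μ j : ℝ)| with hKdef
  have hsumnn : (0:ℝ) ≤ ∑ μ ∈ hm.toFinset, ∑ j, |(μ j : ℝ)| :=
    Finset.sum_nonneg fun μ _ => Finset.sum_nonneg fun j _ => abs_nonneg _
  have hK1 : (1:ℝ) ≤ K := by simp only [hKdef]; linarith
  have hK0 : (0:ℝ) < K := lt_of_lt_of_le one_pos hK1
  have hKp : ∀ p, ∑ j, |(m p j : ℝ)| ≤ K := by
    intro p
    have hmem : m p ∈ hm.toFinset := hm.mem_toFinset.mpr (Set.mem_range_self p)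
    have := Finset.single_le_sum
      (f := fun μ => ∑ j, |(μ j : ℝ)|)
      (fun μ _ => Finset.sum_nonneg fun j _ => abs_nonneg _) hmem
    simp only [hKdef]; linarith
  set δ : ℝ := Real.pi / K with hδdef
  have hδ : 0 < δ := div_pos Real.pi_pos hK0
  refine ⟨{x : Fin r → ℂˣ | ∀ i, Complex.log ((x i : ℂ)) ∈ Metric.ball (0:ℂ) δ}, ?_, ?_⟩
  · rw [Set.setOf_forall]
    refine Filter.iInter_mem.mpr fun i => ?_
    have hcont : ContinuousAt (fun x : Fin r → ℂˣ => Complex.log ((x i : ℂ))) 1 := by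
      have h1 : ContinuousAt (fun x : Fin r → ℂˣ => ((x i : ℂ))) 1 :=
        (Units.continuous_val.comp (continuous_apply i)).continuousAt
      have h2 : ContinuousAt Complex.log (1 : ℂ) :=
        continuousAt_clog Complex.one_mem_slitPlane
      exact ContinuousAt.comp (x := (1 : Fin r → ℂˣ))
        (g := Complex.log) (f := fun x : Fin r → ℂˣ => ((x i : ℂ))) h2 h1
    have hball : Metric.ball (0:ℂ) δ ∈ nhds
        (Complex.log (((1 : Fin r → ℂˣ) i : ℂ))) := by
      simp only [Pi.one_apply, Units.val_one, Complex.log_one]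
      exact Metric.ball_mem_nhds 0 hδ
    exact hcont.preimage_mem_nhds hball
  · rintro x ⟨hxS, hxU⟩
    set w : Fin r → ℂ := fun i => Complex.log ((x i : ℂ)) with hwdef
    have hxw : eG w = x := eG_log x
    refine ⟨w, ?_, hxw⟩
    intro p
    have h1 : (∏ j, x j ^ m p j) = 1 := (hS x).mp hxS p
    rw [← hxw] at h1
    rw [eG_prod] at h1
    have h2 : Complex.exp (∑ j, (m p j : ℂ) * w j) = 1 := by
      have := congrArg (Units.val) h1; simpa [eC_val] using this
    obtain ⟨k, hk⟩ := Complex.exp_eq_one_iff.mp h2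
    have hbound : ‖∑ j, (m p j : ℂ) * w j‖ ≤ Real.pi := by
      calc ‖∑ j, (m p j : ℂ) * w j‖ ≤ ∑ j, ‖(m p j : ℂ) * w j‖ := norm_sum_le _ _
        _ ≤ ∑ j, |(m p j : ℝ)| * δ := by
            refine Finset.sum_le_sum fun j _ => ?_
            rw [norm_mul]
            have h3 : ‖(m p j : ℂ)‖ = |(m p j : ℝ)| := by
              rw [show ((m p j : ℂ)) = (((m p j : ℝ)) : ℂ) by push_cast; ring,
                Complex.norm_real, Real.norm_eq_abs]
            rw [h3]
            refine mul_le_mul_of_nonneg_left ?_ (abs_nonneg _)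
            exact le_of_lt (by simpa using hxU j)
        _ = (∑ j, |(m p j : ℝ)|) * δ := by rw [Finset.sum_mul]
        _ ≤ K * δ := mul_le_mul_of_nonneg_right (hKp p) (le_of_lt hδ)
        _ = Real.pi := by rw [hδdef, mul_div_assoc', mul_div_cancel_left₀ _ hK0.ne']
    have hk0 : k = 0 := by
      by_contra hkne
      have h4 : (1:ℝ) ≤ |(k:ℝ)| := by
        have : (1:ℤ) ≤ |k| := Int.one_le_abs hkne
        calc (1:ℝ) ≤ ((|k| : ℤ) : ℝ) := by exact_mod_cast this
          _ = |(k:ℝ)| := Int.cast_abs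
      have h5 : ‖(k : ℂ) * (2 * (Real.pi:ℂ) * Complex.I)‖ = |(k:ℝ)| * (2 * Real.pi) := by
        rw [norm_mul]
        have : ‖(k : ℂ)‖ = |(k:ℝ)| := by
          rw [show ((k : ℂ)) = (((k : ℝ)) : ℂ) by push_cast; ring, Complex.norm_real,
            Real.norm_eq_abs]
        rw [this]
        congr 1
        rw [norm_mul, Complex.norm_I, mul_one, norm_mul]
        simp [Real.pi_nonneg, _root_.abs_of_nonneg]
      rw [hk, h5] at hbound
      nlinarith [Real.pi_pos]
    rw [hk, hk0] at *
    simpa using hk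
end core

section core2
variable {r : ℕ} {ι : Type*} (m : ι → Fin r → ℤ)

lemma S_ops (S : Set (Fin r → ℂˣ))
    (hS : ∀ x, x ∈ S ↔ ∀ p, (∏ j, x j ^ m p j) = 1) :
    (1 : Fin r → ℂˣ) ∈ S ∧ (∀ x y, x ∈ S → y ∈ S → x * y ∈ S) ∧
      (∀ x, x ∈ S → x⁻¹ ∈ S) := by
  refine ⟨(hS 1).mpr fun p => by simp, fun x y hx hy => (hS _).mpr fun p => ?_,
    fun x hx => (hS _).mpr fun p => ?_⟩
  · have hx' := (hS x).mp hx p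
    have hy' := (hS y).mp hy p
    calc (∏ j, (x * y) j ^ m p j) = (∏ j, x j ^ m p j) * ∏ j, y j ^ m p j := by
          rw [← Finset.prod_mul_distrib]
          exact Finset.prod_congr rfl fun j _ => by simp [mul_zpow]
      _ = 1 := by rw [hx', hy', mul_one]
  · have hx' := (hS x).mp hx p
    calc (∏ j, (x⁻¹) j ^ m p j) = (∏ j, x j ^ m p j)⁻¹ := by
          rw [← Finset.prod_inv_distrib]
          exact Finset.prod_congr rfl fun j _ => by simp [inv_zpow]
      _ = 1 := by rw [hx', inv_one]

lemma eGV_subset (S : Set (Fin r → ℂˣ))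
    (hS : ∀ x, x ∈ S ↔ ∀ p, (∏ j, x j ^ m p j) = 1) :
    eG '' (Vs m) ⊆ S := by
  rintro x ⟨v, hv, rfl⟩
  refine (hS _).mpr fun p => ?_
  rw [eG_prod, hv p, eC_zero]

lemma continuous_eG : Continuous (eG (r := r)) := by
  refine continuous_pi fun i => ?_
  rw [Units.continuous_iff]
  constructor
  · show Continuous fun v : Fin r → ℂ => Complex.exp (v i)
    exact Complex.continuous_exp.comp (continuous_apply i)
  · show Continuous fun v : Fin r → ℂ => (Complex.exp (v i))⁻¹
    simp only [← Complex.exp_neg]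
    exact Complex.continuous_exp.comp ((continuous_apply i).neg)

lemma comp_eq (hm : (Set.range m).Finite) (S : Set (Fin r → ℂˣ))
    (hS : ∀ x, x ∈ S ↔ ∀ p, (∏ j, x j ^ m p j) = 1) :
    connectedComponentIn S 1 = eG '' (Vs m) := by
  classical
  obtain ⟨hS1, hSmul, hSinv⟩ := S_ops m S hS
  set P : Set (Fin r → ℂˣ) := eG '' (Vs m) with hPdef
  have hP1 : (1 : Fin r → ℂˣ) ∈ P := ⟨0, Vs_zero m, eG_zero⟩
  have hPS : P ⊆ S := eGV_subset m S hS
  have hPmul : ∀ x y, x ∈ P → y ∈ P → x * y ∈ P := by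
    rintro x y ⟨v, hv, rfl⟩ ⟨w, hw, rfl⟩
    exact ⟨v + w, Vs_add m hv hw, eG_add v w⟩
  have hPinv : ∀ x, x ∈ P → x⁻¹ ∈ P := by
    rintro x ⟨v, hv, rfl⟩
    refine ⟨-v, by simpa using Vs_smul m hv (-1), ?_⟩
    have h := eG_add v (-v)
    simp only [add_neg_cancel, eG_zero] at h
    rw [eq_comm, inv_eq_iff_mul_eq_one, ← h]
  have hPconn : IsPreconnected P :=
    ((Vs_convex m).isPreconnected).image _ (continuous_eG).continuousOn
  apply le_antisymm
  · -- connectedComponentIn S 1 ⊆ P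
    obtain ⟨U, hU, hUP⟩ := nbhd_lemma m hm S hS
    obtain ⟨O, hOU, hOopen, hO1⟩ := mem_nhds_iff.mp hU
    set C := connectedComponentIn S 1 with hCdef
    have hCpre : IsPreconnected C := isPreconnected_connectedComponentIn
    have hCS : C ⊆ S := connectedComponentIn_subset S 1
    have hC1 : (1 : Fin r → ℂˣ) ∈ C := mem_connectedComponentIn hS1
    intro y hy
    by_contra hyP
    set AA : Set (Fin r → ℂˣ) := ⋃ x ∈ S ∩ P, (fun z => x * z) '' O with hAAdef
    set BB : Set (Fin r → ℂˣ) := ⋃ x ∈ S \ P, (fun z => x * z) '' O with hBBdef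
    have hopen : ∀ x : Fin r → ℂˣ, IsOpen ((fun z => x * z) '' O) := by
      intro x
      have := (Homeomorph.mulLeft x).isOpenMap O hOopen
      simpa using this
    have hAAopen : IsOpen AA := isOpen_biUnion fun x _ => hopen x
    have hBBopen : IsOpen BB := isOpen_biUnion fun x _ => hopen x
    have hCsub : C ⊆ AA ∪ BB := by
      intro z hz
      have hzS : z ∈ S := hCS hz
      by_cases hzP : z ∈ P
      · exact Or.inl (Set.mem_biUnion ⟨hzS, hzP⟩ ⟨1, hO1, mul_one z⟩)
      · exact Or.inr (Set.mem_biUnion ⟨hzS, hzP⟩ ⟨1, hO1, mul_one z⟩)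
    have hCA : (C ∩ AA).Nonempty :=
      ⟨1, hC1, Set.mem_biUnion ⟨hS1, hP1⟩ ⟨1, hO1, mul_one 1⟩⟩
    have hCB : (C ∩ BB).Nonempty :=
      ⟨y, hy, Set.mem_biUnion ⟨hCS hy, hyP⟩ ⟨1, hO1, mul_one y⟩⟩
    obtain ⟨z, hzC, hzA, hzB⟩ := hCpre AA BB hAAopen hBBopen hCsub hCA hCB
    have hzS : z ∈ S := hCS hzC
    -- z ∈ AA forces z ∈ P
    have hzP : z ∈ P := by
      obtain ⟨x, hx, o, ho, hoz⟩ := Set.mem_iUnion₂.mp hzA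
      have h1 : x⁻¹ * z ∈ S := hSmul _ _ (hSinv x hx.1) hzS
      have h2 : x⁻¹ * z ∈ U := by
        have : x⁻¹ * z = o := by rw [← hoz]; group
        rw [this]; exact hOU ho
      have h3 : x⁻¹ * z ∈ P := hUP ⟨h1, h2⟩
      have := hPmul _ _ hx.2 h3
      simpa using this
    -- z ∈ BB forces contradiction
    obtain ⟨x, hx, o, ho, hoz⟩ := Set.mem_iUnion₂.mp hzB
    have h1 : x⁻¹ * z ∈ S := hSmul _ _ (hSinv x hx.1) hzS
    have h2 : x⁻¹ * z ∈ U := by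
      have : x⁻¹ * z = o := by rw [← hoz]; group
      rw [this]; exact hOU ho
    have h3 : x⁻¹ * z ∈ P := hUP ⟨h1, h2⟩
    have h4 : x ∈ P := by
      have := hPmul _ _ hzP (hPinv _ h3)
      simpa [mul_assoc] using this
    exact hx.2 h4
  · exact hPconn.subset_connectedComponentIn hP1 hPS
end core2

section core3
variable {r : ℕ} {ι : Type*}

lemma pow_mem_eGV (m : ι → Fin r → ℤ) (hm : (Set.range m).Finite)
    (S : Set (Fin r → ℂˣ))
    (hS : ∀ x, x ∈ S ↔ ∀ p, (∏ j, x j ^ m p j) = 1)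
    (s : Fin r → ℂˣ) (hs : s ∈ S) :
    ∃ M : ℕ, 0 < M ∧ s ^ M ∈ eG '' (Vs m) := by
  classical
  set D : ℂ := 2 * (Real.pi : ℂ) * Complex.I with hDdef
  have hDne : D ≠ 0 := by
    simp only [hDdef]
    refine mul_ne_zero (mul_ne_zero two_ne_zero ?_) Complex.I_ne_zero
    exact_mod_cast Real.pi_ne_zero
  set w : Fin r → ℂ := fun i => Complex.log ((s i : ℂ)) with hwdef
  have hsw : eG w = s := eG_log s
  set F : Finset (Fin r → ℤ) := hm.toFinset with hFdef
  have hkF : ∀ μ ∈ F, ∃ k : ℤ, ∑ j, (μ j : ℂ) * w j = k * D := by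
    intro μ hμ
    obtain ⟨p, rfl⟩ := hm.mem_toFinset.mp hμ
    have h1 : (∏ j, s j ^ m p j) = 1 := (hS s).mp hs p
    rw [← hsw, eG_prod] at h1
    have h2 : Complex.exp (∑ j, (m p j : ℂ) * w j) = 1 := by
      have := congrArg Units.val h1; simpa [eC_val] using this
    exact Complex.exp_eq_one_iff.mp h2
  choose! kk hkk using hkF
  -- rational solvability
  set colj : Fin r → (↥F → ℚ) := fun j μ => (((μ : Fin r → ℤ)) j : ℚ) with hcoljdef
  set κ : ↥F → ℚ := fun μ => (kk (μ : Fin r → ℤ) : ℚ) with hκdef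
  have hspan : κ ∈ Submodule.span ℚ (Set.range colj) := by
    by_contra hκmem
    set W := Submodule.span ℚ (Set.range colj) with hWdef
    have hq : (Submodule.Quotient.mk κ : (↥F → ℚ) ⧸ W) ≠ 0 := by
      rw [Ne, Submodule.Quotient.mk_eq_zero]; exact hκmem
    obtain ⟨φq, hφq⟩ : ∃ φ : Module.Dual ℚ ((↥F → ℚ) ⧸ W),
        φ (Submodule.Quotient.mk κ) ≠ 0 := by
      by_contra h; push_neg at h
      exact hq ((Module.forall_dual_apply_eq_zero_iff ℚ _).mp h)
    set φ : (↥F → ℚ) →ₗ[ℚ] ℚ := φq.comp W.mkQ with hφdef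
    have hφW : ∀ z ∈ W, φ z = 0 := by
      intro z hz
      have : W.mkQ z = 0 := by
        rw [Submodule.mkQ_apply, Submodule.Quotient.mk_eq_zero]; exact hz
      simp [hφdef, LinearMap.comp_apply, this]
    set c : ↥F → ℚ := fun μ => φ (Pi.single μ 1) with hcdef
    have hφeval : ∀ z : ↥F → ℚ, φ z = ∑ μ, z μ * c μ := by
      intro z
      have hz : z = ∑ μ, (z μ) • (Pi.single μ 1 : ↥F → ℚ) := by
        have h1 : ∀ μ : ↥F, (z μ) • (Pi.single μ 1 : ↥F → ℚ) = Pi.single μ (z μ) := by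
          intro μ; funext ν
          simp [Pi.single_apply, Pi.smul_apply, smul_eq_mul, mul_ite]
        simp_rw [h1]
        exact (Finset.univ_sum_single z).symm
      conv_lhs => rw [hz]
      rw [map_sum]
      exact Finset.sum_congr rfl fun μ _ => by rw [map_smul, smul_eq_mul, hcdef]
    have hcol : ∀ j, ∑ μ, (colj j μ) * c μ = 0 := by
      intro j
      rw [← hφeval]
      exact hφW _ (Submodule.subset_span (Set.mem_range_self j))
    set w' : Fin r → ℂ := fun j => w j / D with hw'def
    have hw' : ∀ μ : ↥F, ∑ j, (((μ : Fin r → ℤ)) j : ℂ) * w' j = (kk (μ : Fin r → ℤ) : ℂ) := by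
      intro μ
      have h := hkk (μ : Fin r → ℤ) μ.2
      calc ∑ j, (((μ : Fin r → ℤ)) j : ℂ) * w' j
          = (∑ j, (((μ : Fin r → ℤ)) j : ℂ) * w j) / D := by
            rw [Finset.sum_div]
            exact Finset.sum_congr rfl fun j _ => (mul_div_assoc _ _ _).symm
        _ = (kk (μ : Fin r → ℤ) : ℂ) := by rw [h, mul_div_cancel_right₀ _ hDne]
    have hfinal : ((∑ μ, κ μ * c μ : ℚ) : ℂ) = 0 := by
      push_cast
      calc ∑ μ : ↥F, ((kk (μ : Fin r → ℤ) : ℂ)) * (c μ : ℂ)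
          = ∑ μ : ↥F, (∑ j, (((μ : Fin r → ℤ)) j : ℂ) * w' j) * (c μ : ℂ) := by
            exact Finset.sum_congr rfl fun μ _ => by rw [hw' μ]
        _ = ∑ μ : ↥F, ∑ j, (((μ : Fin r → ℤ)) j : ℂ) * w' j * (c μ : ℂ) := by
            exact Finset.sum_congr rfl fun μ _ => by rw [Finset.sum_mul]
        _ = ∑ j, ∑ μ : ↥F, (((μ : Fin r → ℤ)) j : ℂ) * w' j * (c μ : ℂ) :=
            Finset.sum_comm
        _ = ∑ j, w' j * (∑ μ : ↥F, (((μ : Fin r → ℤ)) j : ℂ) * (c μ : ℂ)) := by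
            refine Finset.sum_congr rfl fun j _ => ?_
            rw [Finset.mul_sum]
            exact Finset.sum_congr rfl fun μ _ => by ring
        _ = 0 := by
            refine Finset.sum_eq_zero fun j _ => ?_
            have h := hcol j
            have h2 : ((∑ μ, (colj j μ) * c μ : ℚ) : ℂ) = 0 := by rw [h]; norm_num
            push_cast at h2
            rw [show (∑ μ : ↥F, (((μ : Fin r → ℤ)) j : ℂ) * (c μ : ℂ)) = 0 from h2, mul_zero]
    have hne : ((∑ μ, κ μ * c μ : ℚ) : ℂ) ≠ 0 := by
      have h1 : φ κ ≠ 0 := hφq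
      have h2 : (∑ μ, κ μ * c μ) = φ κ := (hφeval κ).symm
      rw [h2]
      exact_mod_cast h1
    exact hne hfinal
  obtain ⟨x, hx⟩ := (Submodule.mem_span_range_iff_exists_fun ℚ).mp hspan
  have hxev : ∀ μ : ↥F, ∑ j, x j * colj j μ = κ μ := by
    intro μ
    have := congrFun hx μ
    simpa [Finset.sum_apply, Pi.smul_apply, smul_eq_mul] using this
  set M : ℕ := ∏ j, (x j).den with hMdef
  have hM0 : 0 < M := Finset.prod_pos fun j _ => (x j).pos
  have hint : ∀ j, ∃ u : ℤ, (u : ℚ) = x j * M := by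
    intro j
    obtain ⟨e, he⟩ := Finset.dvd_prod_of_mem (fun j => (x j).den) (Finset.mem_univ j)
    refine ⟨(x j).num * e, ?_⟩
    rw [show (M : ℚ) = ((x j).den : ℚ) * (e : ℚ) by exact_mod_cast congrArg (Nat.cast (R := ℚ)) he]
    push_cast
    rw [← mul_assoc, Rat.mul_den_eq_num]
  choose u hu using hint
  have hurel : ∀ μ : ↥F, (∑ j, ((μ : Fin r → ℤ)) j * u j) = (M : ℤ) * kk (μ : Fin r → ℤ) := by
    intro μ
    have h2 : (∑ j, (((μ : Fin r → ℤ)) j : ℚ) * (u j : ℚ)) = (M : ℚ) * (kk (μ : Fin r → ℤ) : ℚ) := by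
      calc ∑ j, (((μ : Fin r → ℤ)) j : ℚ) * (u j : ℚ)
          = ∑ j, (((μ : Fin r → ℤ)) j : ℚ) * (x j * M) := by
            exact Finset.sum_congr rfl fun j _ => by rw [hu j]
        _ = (∑ j, x j * colj j μ) * M := by
            rw [Finset.sum_mul]
            exact Finset.sum_congr rfl fun j _ => by rw [hcoljdef]; ring
        _ = (M : ℚ) * (kk (μ : Fin r → ℤ) : ℚ) := by rw [hxev μ, hκdef]; ring
    exact_mod_cast h2
  refine ⟨M, hM0, ?_⟩
  set v : Fin r → ℂ := fun j => (M : ℂ) * w j - D * (u j : ℂ) with hvdef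
  have hv : v ∈ Vs m := by
    intro p
    have hmF : m p ∈ F := hm.mem_toFinset.mpr ⟨p, rfl⟩
    have h1 := hkk (m p) hmF
    have h2 := hurel ⟨m p, hmF⟩
    have h2c : (∑ j, (m p j : ℂ) * (u j : ℂ)) = (M : ℂ) * (kk (m p) : ℂ) := by
      exact_mod_cast h2
    calc ∑ j, (m p j : ℂ) * v j
        = (M : ℂ) * (∑ j, (m p j : ℂ) * w j) - D * (∑ j, (m p j : ℂ) * (u j : ℂ)) := by
          rw [Finset.mul_sum, Finset.mul_sum, ← Finset.sum_sub_distrib]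
          exact Finset.sum_congr rfl fun j _ => by rw [hvdef]; ring
      _ = (M : ℂ) * ((kk (m p) : ℂ) * D) - D * ((M : ℂ) * (kk (m p) : ℂ)) := by rw [h1, h2c]
      _ = 0 := by ring
  refine ⟨v, hv, ?_⟩
  have hstep : s ^ M = eG ((M : ℂ) • w) := by rw [← hsw, eG_pow]
  have hsplit : ((M : ℂ) • w) = v + fun j => D * (u j : ℂ) := by
    funext j; simp [hvdef, Pi.add_apply]
  have hone : eG (fun j => D * (u j : ℂ)) = 1 := by
    funext j; ext : 1
    show Complex.exp (D * (u j : ℂ)) = 1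
    rw [mul_comm, hDdef]
    exact Complex.exp_int_mul_two_pi_mul_I (u j)
  rw [hstep, hsplit, eG_add, hone, mul_one]
end core3

lemma mono_inj {r : ℕ} (M M' : Matrix (Fin r) (Fin r) ℤ)
    (h : ∀ (x : Fin r → ℂˣ) (i : Fin r), (∏ j, x j ^ M i j) = ∏ j, x j ^ M' i j) :
    M = M' := by
  classical
  ext i j₀
  set u2 : ℂˣ := Units.mk0 (2 : ℂ) two_ne_zero with hu2
  have hL : ∀ N : Matrix (Fin r) (Fin r) ℤ,
      (∏ j, (fun j => if j = j₀ then u2 else 1) j ^ N i j) = u2 ^ N i j₀ := by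
    intro N
    calc (∏ j, (fun j => if j = j₀ then u2 else 1) j ^ N i j)
        = ∏ j, (if j = j₀ then u2 ^ N i j else 1) := by
          refine Finset.prod_congr rfl fun j _ => ?_
          by_cases hj : j = j₀ <;> simp [hj]
      _ = u2 ^ N i j₀ := by rw [Finset.prod_ite_eq']; simp
  have hx := h (fun j => if j = j₀ then u2 else 1) i
  rw [hL M, hL M'] at hx
  have hval := congrArg Units.val hx
  rw [Units.val_zpow_eq_zpow_val, Units.val_zpow_eq_zpow_val] at hval
  have hnorm := congrArg (fun z : ℂ => ‖z‖) hval
  simp only [norm_zpow] at hnorm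
  have h2 : ‖(u2 : ℂ)‖ = 2 := by
    rw [hu2]; simp
  rw [h2] at hnorm
  exact zpow_right_injective₀ (by norm_num) (by norm_num) hnorm


/-- Let `Γ` act on the complex torus `T̂ = (ℂˣ)ʳ` through a finite quotient by algebraic
automorphisms (monomial maps given by integer matrices).  Suppose `c ∈ C¹(Γ, T̂)` is a
1-cochain whose square is a coboundary and whose differential `∂c` has finite order.
If `b ∈ T̂` satisfies `b⁻ⁿ σ(bⁿ) = 1` for all `σ` (i.e. `bⁿ` is `Γ`-fixed) for some `n ≥ 1`,
and `bⁿ` lies in the identity component `T̂^{Γ,0}` of the fixed-point group, then there is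
`t ∈ T̂^{Γ,0}` with `tⁿ = bⁿ`, and `b' = t⁻¹ b` is a torsion element with the same
coboundary `σ ↦ b'⁻¹ σ(b') = b⁻¹ σ(b)`.  Consequently, every coboundary in
`B¹(Γ, T̂) ∩ C¹(Γ, T̂[∞])` is the coboundary of a torsion element. -/
theorem stmt15 {Γ : Type*} [Group Γ] (r : ℕ)
    (ρ : Γ →* ((Fin r → ℂˣ) ≃* (Fin r → ℂˣ)))
    (halg : ∀ σ : Γ, ∃ A : Matrix (Fin r) (Fin r) ℤ,
      ∀ (x : Fin r → ℂˣ) (i : Fin r), ρ σ x i = ∏ j, x j ^ A i j)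
    (hfin : (Set.range ρ).Finite)
    (c : Γ → Fin r → ℂˣ)
    (hc2 : ∃ a : Fin r → ℂˣ, ∀ σ, c σ ^ 2 = a⁻¹ * ρ σ a)
    (hdc : ∃ N : ℕ, 0 < N ∧ ∀ σ τ, (ρ σ (c τ) * (c (σ * τ))⁻¹ * c σ) ^ N = 1)
    (b : Fin r → ℂˣ) (n : ℕ) (hn : 0 < n)
    (hbfix : ∀ σ, ρ σ (b ^ n) = b ^ n)
    (hb0 : b ^ n ∈ connectedComponentIn {x : Fin r → ℂˣ | ∀ σ, ρ σ x = x} 1) :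
    (∃ t ∈ connectedComponentIn {x : Fin r → ℂˣ | ∀ σ, ρ σ x = x} 1,
      t ^ n = b ^ n ∧ IsOfFinOrder (t⁻¹ * b) ∧
      ∀ σ, (t⁻¹ * b)⁻¹ * ρ σ (t⁻¹ * b) = b⁻¹ * ρ σ b) ∧
    (∀ d : Γ → Fin r → ℂˣ, (∃ b₀ : Fin r → ℂˣ, ∀ σ, d σ = b₀⁻¹ * ρ σ b₀) →
      (∀ σ, IsOfFinOrder (d σ)) →
      ∃ b' : Fin r → ℂˣ, IsOfFinOrder b' ∧ ∀ σ, d σ = b'⁻¹ * ρ σ b') := by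
  classical
  obtain ⟨A, hA⟩ : ∃ A : Γ → Matrix (Fin r) (Fin r) ℤ,
      ∀ σ (x : Fin r → ℂˣ) (i : Fin r), ρ σ x i = ∏ j, x j ^ A σ i j := by
    choose A hA using halg; exact ⟨A, hA⟩
  -- finiteness of the range of A
  have hranA : (Set.range A).Finite := by
    have hinj : Set.InjOn
        (fun Mt : Matrix (Fin r) (Fin r) ℤ =>
          (fun (x : Fin r → ℂˣ) (i : Fin r) => ∏ j, x j ^ Mt i j)) (Set.range A) :=
      fun M _ M' _ h => mono_inj M M' fun x i => congrFun (congrFun h x) i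
    refine Set.Finite.of_finite_image ?_ hinj
    refine Set.Finite.subset (hfin.image
      (fun e : (Fin r → ℂˣ) ≃* (Fin r → ℂˣ) => (fun (x : Fin r → ℂˣ) (i : Fin r) => e x i))) ?_
    rintro _ ⟨_, ⟨σ, rfl⟩, rfl⟩
    refine ⟨ρ σ, ⟨σ, rfl⟩, ?_⟩
    funext x i
    show (ρ σ) x i = ∏ j, x j ^ A σ i j
    exact hA σ x i
  -- the exponent vectors
  set m : Γ × Fin r → Fin r → ℤ :=
    fun p j => A p.1 p.2 j - (if p.2 = j then 1 else 0) with hmdef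
  have hm : (Set.range m).Finite := by
    refine Set.Finite.subset ((hranA.prod (Set.finite_univ (α := Fin r))).image
      (fun q : (Matrix (Fin r) (Fin r) ℤ) × Fin r =>
        fun j => q.1 q.2 j - (if q.2 = j then 1 else 0))) ?_
    rintro _ ⟨p, rfl⟩
    exact ⟨(A p.1, p.2), ⟨⟨p.1, rfl⟩, trivial⟩, rfl⟩
  set SS : Set (Fin r → ℂˣ) := {x : Fin r → ℂˣ | ∀ σ, ρ σ x = x} with hSSdef
  have hkey : ∀ (x : Fin r → ℂˣ) σ i, (∏ j, x j ^ m (σ, i) j) = ρ σ x i * (x i)⁻¹ := by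
    intro x σ i
    have h1 : (∏ j, x j ^ m (σ, i) j)
        = (∏ j, x j ^ A σ i j) * (∏ j, x j ^ (if i = j then (1:ℤ) else 0))⁻¹ := by
      rw [← Finset.prod_inv_distrib, ← Finset.prod_mul_distrib]
      refine Finset.prod_congr rfl fun j _ => ?_
      show x j ^ (A σ i j - (if i = j then (1:ℤ) else 0)) = _
      simp [zpow_sub, div_eq_mul_inv]
    have h2 : (∏ j, x j ^ (if i = j then (1:ℤ) else 0)) = x i := by
      calc (∏ j, x j ^ (if i = j then (1:ℤ) else 0))
          = ∏ j, (if i = j then x j else 1) := by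
            refine Finset.prod_congr rfl fun j _ => ?_
            by_cases hj : i = j <;> simp [hj]
        _ = x i := by rw [Finset.prod_ite_eq]; simp
    rw [h1, h2, hA σ x i]
  have hS : ∀ x : Fin r → ℂˣ, x ∈ SS ↔ ∀ p : Γ × Fin r, (∏ j, x j ^ m p j) = 1 := by
    intro x
    constructor
    · intro h p
      rw [show p = (p.1, p.2) from rfl, hkey x p.1 p.2,
        show ρ p.1 x p.2 = x p.2 from congrFun (h p.1) p.2]
      simp
    · intro h σ
      funext i
      have := h (σ, i)
      rw [hkey x σ i] at this
      exact mul_inv_eq_one.mp this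
  have hcomp : connectedComponentIn SS 1 = eG '' (Vs m) := comp_eq m hm SS hS
  constructor
  · -- part 1
    rw [hcomp] at hb0 ⊢
    obtain ⟨v, hv, hbv⟩ := hb0
    have hn' : ((n : ℂ)) ≠ 0 := by exact_mod_cast hn.ne'
    set t : Fin r → ℂˣ := eG (((n : ℂ))⁻¹ • v) with htdef
    have htP : t ∈ eG '' (Vs m) := ⟨_, Vs_smul m hv _, rfl⟩
    have htS : t ∈ SS := eGV_subset m SS hS htP
    have htn : t ^ n = b ^ n := by
      rw [htdef, eG_pow, smul_smul, mul_inv_cancel₀ hn', one_smul, hbv]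
    refine ⟨t, htP, htn, ?_, ?_⟩
    · refine isOfFinOrder_iff_pow_eq_one.mpr ⟨n, hn, ?_⟩
      rw [mul_pow, inv_pow, htn]
      simp
    · intro σ
      have hts : ρ σ t = t := htS σ
      rw [map_mul, map_inv, hts]
      group
  · -- part 2
    rintro d ⟨b₀, hd⟩ htor
    have hDfin : (Set.range d).Finite := by
      refine Set.Finite.subset (hfin.image
        (fun e : (Fin r → ℂˣ) ≃* (Fin r → ℂˣ) => b₀⁻¹ * e b₀)) ?_
      rintro _ ⟨σ, rfl⟩
      exact ⟨ρ σ, ⟨σ, rfl⟩, (hd σ).symm⟩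
    set N : ℕ := ∏ y ∈ hDfin.toFinset, orderOf y with hNdef
    have hN0 : 0 < N := by
      refine Finset.prod_pos fun y hy => ?_
      obtain ⟨σ, rfl⟩ := hDfin.mem_toFinset.mp hy
      exact orderOf_pos_iff.mpr (htor σ)
    have hdN : ∀ σ, d σ ^ N = 1 := by
      intro σ
      refine orderOf_dvd_iff_pow_eq_one.mp ?_
      exact Finset.dvd_prod_of_mem _ (hDfin.mem_toFinset.mpr (Set.mem_range_self σ))
    have hfix : ∀ σ, ρ σ (b₀ ^ N) = b₀ ^ N := by
      intro σ
      have h1 := hdN σ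
      rw [hd σ, mul_pow, inv_pow, ← map_pow] at h1
      exact (inv_mul_eq_one.mp h1).symm
    have hsS : b₀ ^ N ∈ SS := hfix
    obtain ⟨M, hM0, himg⟩ := pow_mem_eGV m hm SS hS _ hsS
    obtain ⟨vv, hvv, hvveq⟩ := himg
    have hNM : (0 : ℕ) < N * M := Nat.mul_pos hN0 hM0
    have hNM' : (((N * M : ℕ) : ℂ)) ≠ 0 := by exact_mod_cast hNM.ne'
    set g : Fin r → ℂ := -((((N * M : ℕ) : ℂ))⁻¹ • vv) with hgdef
    set f : Fin r → ℂˣ := eG g with hfdef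
    have hfP : f ∈ eG '' (Vs m) := by
      refine ⟨g, ?_, rfl⟩
      rw [hgdef, show -((((N * M : ℕ) : ℂ))⁻¹ • vv) = (-(((N * M : ℕ) : ℂ))⁻¹) • vv by
        rw [neg_smul]]
      exact Vs_smul m hvv _
    have hfS : f ∈ SS := eGV_subset m SS hS hfP
    refine ⟨f * b₀, ?_, ?_⟩
    · refine isOfFinOrder_iff_pow_eq_one.mpr ⟨N * M, hNM, ?_⟩
      have h1 : f ^ (N * M) = eG (((N * M : ℕ) : ℂ) • g) := by rw [hfdef, eG_pow]
      have h2 : b₀ ^ (N * M) = eG vv := by rw [pow_mul, ← hvveq]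
      rw [mul_pow, h1, h2, ← eG_add]
      have h3 : (((N * M : ℕ) : ℂ) • g) + vv = 0 := by
        funext j
        simp only [hgdef, Pi.add_apply, Pi.smul_apply, Pi.neg_apply, Pi.zero_apply,
          smul_eq_mul, mul_neg, neg_mul]
        rw [← mul_assoc, mul_inv_cancel₀ hNM', one_mul, neg_add_cancel]
      rw [h3, eG_zero]
    · intro σ
      rw [hd σ, map_mul, show ρ σ f = f from hfS σ]
      group
end
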